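/- For every integer n ≥ 3, the sum over k from 3 to n of H_k/(k−2) equals (1/2)·(H_{n+1}^2 + H_{n+1}^{(2)}) − (3n^2−1)/((n−1)n(n+1))·H_{n+1} + (7n^2−n−2)/(4n(n+1)). -/

import Mathlib

/-- The `n`-th harmonic number `H_n = ∑_{k=1}^n 1/k`, with `H_0 = 0`. -/
def H (n : ℕ) : ℚ := ∑ k ∈ Finset.range n, 1 / ((k : ℚ) + 1)

/-- The generalized harmonic number of order 2, `H_n^{(2)} = ∑_{k=1}^n 1/k^2`, with `H_0^{(2)} = 0`. -/
def H2 (n : ℕ) : ℚ := ∑ k ∈ Finset.range n, 1 / ((k : ℚ) + 1) ^ 2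

lemma H_succ (n : ℕ) : H (n + 1) = H n + 1 / ((n : ℚ) + 1) := by
  simp [H, Finset.sum_range_succ]

lemma H2_succ (n : ℕ) : H2 (n + 1) = H2 n + 1 / ((n : ℚ) + 1) ^ 2 := by
  simp [H2, Finset.sum_range_succ]

theorem stmt_7 (n : ℕ) (hn : 3 ≤ n) :
    ∑ k ∈ Finset.Icc 3 n, H k / ((k : ℚ) - 2) =
      (1 / 2) * (H (n + 1) ^ 2 + H2 (n + 1))
        - (3 * (n : ℚ) ^ 2 - 1) / (((n : ℚ) - 1) * (n : ℚ) * ((n : ℚ) + 1)) * H (n + 1)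
        + (7 * (n : ℚ) ^ 2 - (n : ℚ) - 2) / (4 * (n : ℚ) * ((n : ℚ) + 1)) := by
  induction n, hn using Nat.le_induction with
  | base =>
    norm_num [Finset.Icc_self, H, H2, Finset.sum_range_succ]
  | succ n hn ih =>
    rw [show n + 1 = n + 1 from rfl, Finset.sum_Icc_succ_top (by omega : 3 ≤ n + 1), ih]
    have hq : (3 : ℚ) ≤ (n : ℚ) := by exact_mod_cast hn
    have h1 : ((n : ℚ) - 1) ≠ 0 := by linarith
    have h2 : (n : ℚ) ≠ 0 := by linarith
    have h3 : ((n : ℚ) + 1) ≠ 0 := by linarith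
    have h4 : ((n : ℚ) + 2) ≠ 0 := by linarith
    have h1' : ((n : ℚ) + 1 - 2) ≠ 0 := by linarith
    have h2' : ((n : ℚ) + 1 - 1) ≠ 0 := by linarith
    rw [H_succ (n + 1), H2_succ (n + 1)]
    push_cast
    field_simp
    ring
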